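/- Let d ≥ 2 and let a ∈ ℝ^{d×d} be symmetric and indefinite, i.e., its smallest eigenvalue λ₋ and largest eigenvalue λ₊ satisfy λ₋ < 0 < λ₊. Set r₋ := √(−λ₋/(λ₊ − λ₋)) and r₊ := √(λ₊/(λ₊ − λ₋)). Then max_{ξ ∈ S^{d−1}} (2‖aξ‖² − ⟨aξ, ξ⟩²) = λ₋² + λ₊², and a unit vector ξ attains this maximum if and only if ξ = r₋·x + r₊·y for some unit vectors x, y with a x = λ₋·x and a y = λ₊·y. -/

import Mathlib

open Finset

private lemma s13_dot_symm {d : ℕ} {a : Matrix (Fin d) (Fin d) ℝ} (ha : a.IsSymm)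
    (x y : Fin d → ℝ) :
    ∑ i, a.mulVec x i * y i = ∑ i, x i * a.mulVec y i := by
  simp only [Matrix.mulVec, dotProduct, Finset.sum_mul, Finset.mul_sum]
  rw [Finset.sum_comm]
  refine Finset.sum_congr rfl fun i _ => Finset.sum_congr rfl fun j _ => ?_
  rw [ha.apply j i]
  ring

private lemma s13_eig_orth {d : ℕ} {a : Matrix (Fin d) (Fin d) ℝ} (ha : a.IsSymm)
    {lm lp : ℝ} (hne : lm ≠ lp) {x y : Fin d → ℝ}
    (hx : a.mulVec x = lm • x) (hy : a.mulVec y = lp • y) :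
    ∑ i, x i * y i = 0 := by
  have h := s13_dot_symm ha x y
  rw [hx, hy] at h
  simp only [Pi.smul_apply, smul_eq_mul, ← Finset.mul_sum] at h
  have h2 : ∀ i, x i * (lp * y i) = lp * (x i * y i) := fun i => by ring
  have h2' : ∀ i, lm * x i * y i = lm * (x i * y i) := fun i => by ring
  rw [Finset.sum_congr rfl fun i _ => h2 i, Finset.sum_congr rfl fun i _ => h2' i,
    ← Finset.mul_sum, ← Finset.mul_sum] at h
  have h3 : (lm - lp) * ∑ i, x i * y i = 0 := by linarith [h]
  rcases mul_eq_zero.mp h3 with h4 | h4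
  · exact absurd (by linarith : lm = lp) hne
  · exact h4

set_option maxHeartbeats 1000000 in
theorem statement13 (d : ℕ) (hd : 2 ≤ d) (a : Matrix (Fin d) (Fin d) ℝ) (ha : a.IsSymm)
    (lm lp : ℝ)
    (hlm : IsLeast {μ : ℝ | ∃ v : Fin d → ℝ, v ≠ 0 ∧ a.mulVec v = μ • v} lm)
    (hlp : IsGreatest {μ : ℝ | ∃ v : Fin d → ℝ, v ≠ 0 ∧ a.mulVec v = μ • v} lp)
    (hneg : lm < 0) (hpos : 0 < lp) :
    IsGreatest {g : ℝ | ∃ ξ : Fin d → ℝ, (∑ i, ξ i ^ 2) = 1 ∧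
      g = 2 * (∑ i, (a.mulVec ξ i) ^ 2) - (∑ i, a.mulVec ξ i * ξ i) ^ 2}
      (lm ^ 2 + lp ^ 2) ∧
    ∀ ξ : Fin d → ℝ, (∑ i, ξ i ^ 2) = 1 →
      (2 * (∑ i, (a.mulVec ξ i) ^ 2) - (∑ i, a.mulVec ξ i * ξ i) ^ 2 = lm ^ 2 + lp ^ 2 ↔
        ∃ x y : Fin d → ℝ, (∑ i, x i ^ 2) = 1 ∧ (∑ i, y i ^ 2) = 1 ∧
          a.mulVec x = lm • x ∧ a.mulVec y = lp • y ∧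
          ξ = Real.sqrt (-lm / (lp - lm)) • x + Real.sqrt (lp / (lp - lm)) • y) := by
  classical
  have hlmlp : lm < lp := hneg.trans hpos
  have hne : lm ≠ lp := ne_of_lt hlmlp
  have hD : lp - lm ≠ 0 := by intro h; exact hne (by linarith)
  have hDpos : 0 < lp - lm := by linarith
  have hA : a.IsHermitian := by
    rwa [Matrix.IsHermitian, Matrix.conjTranspose_eq_transpose_of_trivial]
  set e : Fin d → (Fin d → ℝ) := fun i => ⇑(hA.eigenvectorBasis i) with he_def
  set μ : Fin d → ℝ := hA.eigenvalues with hμ_def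
  have hae : ∀ i, a.mulVec (e i) = μ i • e i := fun i => hA.mulVec_eigenvectorBasis i
  -- orthonormality in coordinates
  have horth : ∀ i j, (∑ k, e i k * e j k) = if i = j then 1 else 0 := by
    intro i j
    have h := orthonormal_iff_ite.mp hA.eigenvectorBasis.orthonormal i j
    simpa [he_def, PiLp.inner_apply, RCLike.inner_apply, starRingEnd_apply, mul_comm] using h
  -- expansion of vectors in the eigenbasis
  have hrepr : ∀ ξ : Fin d → ℝ, ξ = ∑ i, (∑ l, e i l * ξ l) • e i := by
    intro ξ
    funext k
    rw [Finset.sum_apply]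
    simp only [Pi.smul_apply, smul_eq_mul]
    have h := hA.eigenvectorBasis.sum_repr' (WithLp.toLp 2 ξ)
    have h' := congrArg (EuclideanSpace.equiv (Fin d) ℝ).toLinearEquiv h
    rw [map_sum] at h'
    simp only [map_smul] at h'
    have h2 := congrFun h' k
    simp only [Finset.sum_apply, Pi.smul_apply, smul_eq_mul] at h2
    simp only [PiLp.inner_apply, RCLike.inner_apply, starRingEnd_apply] at h2
    simp only [he_def]
    simp only [star_trivial, mul_comm (ξ _)] at h2
    exact h2.symm
  -- inner products of coefficient sums
  have hdot : ∀ f g : Fin d → ℝ,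
      (∑ k, (∑ i, f i • e i) k * (∑ j, g j • e j) k) = ∑ i, f i * g i := by
    intro f g
    simp only [Finset.sum_apply, Pi.smul_apply, smul_eq_mul]
    have step1 : ∀ k, (∑ i, f i * e i k) * (∑ j, g j * e j k)
        = ∑ i, ∑ j, (f i * g j) * (e i k * e j k) := by
      intro k
      rw [Finset.sum_mul_sum]
      exact Finset.sum_congr rfl fun i _ => Finset.sum_congr rfl fun j _ => by ring
    rw [Finset.sum_congr rfl fun k _ => step1 k, Finset.sum_comm]
    have step2 : ∀ i, (∑ k, ∑ j, (f i * g j) * (e i k * e j k))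
        = ∑ j, (f i * g j) * ∑ k, e i k * e j k := by
      intro i
      rw [Finset.sum_comm]
      exact Finset.sum_congr rfl fun j _ => by rw [Finset.mul_sum]
    rw [Finset.sum_congr rfl fun i _ => step2 i]
    simp [horth, mul_ite, Finset.sum_ite_eq]
  -- mulVec of coefficient sums
  have hmul : ∀ f : Fin d → ℝ, a.mulVec (∑ i, f i • e i) = ∑ i, (μ i * f i) • e i := by
    intro f
    rw [← Matrix.mulVecLin_apply, map_sum]
    refine Finset.sum_congr rfl fun i _ => ?_
    rw [map_smul, Matrix.mulVecLin_apply, hae i, smul_smul, mul_comm (f i) (μ i)]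
  -- eigenvalue bounds
  have hbd : ∀ i, lm ≤ μ i ∧ μ i ≤ lp := by
    intro i
    have hne0 : e i ≠ 0 := by
      intro h0
      have h1 := horth i i
      rw [if_pos rfl, h0] at h1
      simp at h1
    have hmem : μ i ∈ {μ' : ℝ | ∃ v : Fin d → ℝ, v ≠ 0 ∧ a.mulVec v = μ' • v} :=
      ⟨e i, hne0, hae i⟩
    exact ⟨hlm.2 hmem, hlp.2 hmem⟩
  -- normalization of eigenvectors
  have hnorm : ∀ (v : Fin d → ℝ) (l : ℝ), v ≠ 0 → a.mulVec v = l • v →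
      ∃ x : Fin d → ℝ, (∑ i, x i ^ 2) = 1 ∧ a.mulVec x = l • x := by
    intro v l hv hav
    have hS : 0 < ∑ i, v i ^ 2 := by
      obtain ⟨i, hi⟩ := Function.ne_iff.mp hv
      refine Finset.sum_pos' (fun j _ => sq_nonneg _) ⟨i, Finset.mem_univ i, ?_⟩
      have h1 : v i ^ 2 ≠ 0 := pow_ne_zero _ hi
      exact lt_of_le_of_ne (sq_nonneg _) (Ne.symm h1)
    refine ⟨(Real.sqrt (∑ i, v i ^ 2))⁻¹ • v, ?_, ?_⟩
    · simp only [Pi.smul_apply, smul_eq_mul, mul_pow, ← Finset.mul_sum]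
      rw [inv_pow, Real.sq_sqrt hS.le]
      exact inv_mul_cancel₀ (ne_of_gt hS)
    · rw [Matrix.mulVec_smul, hav, smul_comm]
  -- value computation for combinations of eigenvectors
  have hback : ∀ x y : Fin d → ℝ, (∑ i, x i ^ 2) = 1 → (∑ i, y i ^ 2) = 1 →
      a.mulVec x = lm • x → a.mulVec y = lp • y →
      (∑ i, (Real.sqrt (-lm / (lp - lm)) • x + Real.sqrt (lp / (lp - lm)) • y) i ^ 2) = 1 ∧
      2 * (∑ i, (a.mulVec (Real.sqrt (-lm / (lp - lm)) • x + Real.sqrt (lp / (lp - lm)) • y) i) ^ 2)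
        - (∑ i, a.mulVec (Real.sqrt (-lm / (lp - lm)) • x + Real.sqrt (lp / (lp - lm)) • y) i *
            (Real.sqrt (-lm / (lp - lm)) • x + Real.sqrt (lp / (lp - lm)) • y) i) ^ 2
        = lm ^ 2 + lp ^ 2 := by
    intro x y hx1 hy1 hax hay
    have hxy : ∑ i, x i * y i = 0 := s13_eig_orth ha hne hax hay
    set s := Real.sqrt (-lm / (lp - lm)) with hs_def
    set t := Real.sqrt (lp / (lp - lm)) with ht_def
    have hs2 : s ^ 2 = -lm / (lp - lm) :=
      Real.sq_sqrt (div_nonneg (by linarith) hDpos.le)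
    have ht2 : t ^ 2 = lp / (lp - lm) :=
      Real.sq_sqrt (div_nonneg hpos.le hDpos.le)
    have hbilin : ∀ p q r w : ℝ,
        ∑ i, (p * x i + q * y i) * (r * x i + w * y i) = p * r + q * w := by
      intro p q r w
      have expand : ∀ i, (p * x i + q * y i) * (r * x i + w * y i)
          = (p * r) * (x i ^ 2) + (q * w) * (y i ^ 2) + (p * w + q * r) * (x i * y i) :=
        fun i => by ring
      rw [Finset.sum_congr rfl fun i _ => expand i]
      simp only [Finset.sum_add_distrib, ← Finset.mul_sum]
      rw [hx1, hy1, hxy]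
      ring
    have haξ : a.mulVec (s • x + t • y) = (s * lm) • x + (t * lp) • y := by
      rw [Matrix.mulVec_add, Matrix.mulVec_smul, Matrix.mulVec_smul, hax, hay,
        smul_smul, smul_smul]
    have hξk : ∀ k, (s • x + t • y) k = s * x k + t * y k := fun k => rfl
    have haξk : ∀ k, a.mulVec (s • x + t • y) k = (s * lm) * x k + (t * lp) * y k := by
      intro k; rw [haξ]; rfl
    constructor
    · have h1a : ∑ i, (s • x + t • y) i ^ 2
          = ∑ i, (s * x i + t * y i) * (s * x i + t * y i) :=
        Finset.sum_congr rfl fun i _ => by rw [hξk i, sq]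
      have h1 : ∑ i, (s • x + t • y) i ^ 2 = s * s + t * t := by
        rw [h1a]; exact hbilin s t s t
      rw [h1, ← sq, ← sq, hs2, ht2]
      field_simp
      ring
    · have h2a : ∑ i, (a.mulVec (s • x + t • y) i) ^ 2
          = ∑ i, ((s * lm) * x i + (t * lp) * y i) * ((s * lm) * x i + (t * lp) * y i) :=
        Finset.sum_congr rfl fun i _ => by rw [haξk i, sq]
      have h2 : ∑ i, (a.mulVec (s • x + t • y) i) ^ 2
          = (s * lm) * (s * lm) + (t * lp) * (t * lp) := by
        rw [h2a]; exact hbilin _ _ _ _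
      have h3a : ∑ i, a.mulVec (s • x + t • y) i * (s • x + t • y) i
          = ∑ i, ((s * lm) * x i + (t * lp) * y i) * (s * x i + t * y i) :=
        Finset.sum_congr rfl fun i _ => by rw [haξk i, hξk i]
      have h3 : ∑ i, a.mulVec (s • x + t • y) i * (s • x + t • y) i
          = (s * lm) * s + (t * lp) * t := by
        rw [h3a]; exact hbilin _ _ _ _
      rw [h2, h3]
      have e1 : (s * lm) * (s * lm) = s ^ 2 * lm ^ 2 := by ring
      have e2 : (t * lp) * (t * lp) = t ^ 2 * lp ^ 2 := by ring
      have e3 : (s * lm) * s = s ^ 2 * lm := by ring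
      have e4 : (t * lp) * t = t ^ 2 * lp := by ring
      rw [e1, e2, e3, e4, hs2, ht2]
      field_simp
      ring
  -- main upper bound and equality analysis
  have upper : ∀ ξ : Fin d → ℝ, (∑ i, ξ i ^ 2) = 1 →
      (2 * (∑ i, (a.mulVec ξ i) ^ 2) - (∑ i, a.mulVec ξ i * ξ i) ^ 2 ≤ lm ^ 2 + lp ^ 2) ∧
      (2 * (∑ i, (a.mulVec ξ i) ^ 2) - (∑ i, a.mulVec ξ i * ξ i) ^ 2 = lm ^ 2 + lp ^ 2 →
        ∃ x y : Fin d → ℝ, (∑ i, x i ^ 2) = 1 ∧ (∑ i, y i ^ 2) = 1 ∧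
          a.mulVec x = lm • x ∧ a.mulVec y = lp • y ∧
          ξ = Real.sqrt (-lm / (lp - lm)) • x + Real.sqrt (lp / (lp - lm)) • y) := by
    intro ξ hξ1
    set c : Fin d → ℝ := fun i => ∑ l, e i l * ξ l with hc_def
    have hx : ξ = ∑ i, c i • e i := hrepr ξ
    set X := ∑ i, (μ i * c i) * (μ i * c i) with hX_def
    set Y := ∑ i, (μ i * c i) * c i with hY_def
    set Z := ∑ i, c i * c i with hZ_def
    have hZ : Z = 1 := by
      have h0 : ∑ k, ξ k ^ 2 = Z := by
        have h0a : ∑ k, ξ k ^ 2 = ∑ k, ξ k * ξ k :=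
          Finset.sum_congr rfl fun k _ => sq (ξ k)
        rw [h0a]
        conv_lhs => rw [hx]
        exact hdot c c
      rw [← h0, hξ1]
    have haξ : a.mulVec ξ = ∑ i, (μ i * c i) • e i := by
      conv_lhs => rw [hx]
      exact hmul c
    have hA2 : ∑ k, (a.mulVec ξ k) ^ 2 = X := by
      have h0a : ∑ k, (a.mulVec ξ k) ^ 2 = ∑ k, a.mulVec ξ k * a.mulVec ξ k :=
        Finset.sum_congr rfl fun k _ => sq _
      rw [h0a]
      conv_lhs => rw [haξ]
      exact hdot _ _
    have hB : ∑ k, a.mulVec ξ k * ξ k = Y := by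
      conv_lhs => rw [haξ, hx]
      exact hdot _ _
    have hkeyneg : ∑ i, (μ i - lm) * (μ i - lp) * (c i * c i) ≤ 0 := by
      refine Finset.sum_nonpos fun i _ => ?_
      nlinarith [(hbd i).1, (hbd i).2, mul_self_nonneg (c i),
        mul_nonneg (mul_nonneg (sub_nonneg.2 (hbd i).1) (sub_nonneg.2 (hbd i).2))
          (mul_self_nonneg (c i))]
    have hexpand : ∑ i, (μ i - lm) * (μ i - lp) * (c i * c i)
        = X - (lm + lp) * Y + lm * lp * Z := by
      rw [hX_def, hY_def, hZ_def, Finset.mul_sum, Finset.mul_sum,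
        ← Finset.sum_sub_distrib, ← Finset.sum_add_distrib]
      exact Finset.sum_congr rfl fun i _ => by ring
    have hineq : X - (lm + lp) * Y + lm * lp * Z ≤ 0 := hexpand ▸ hkeyneg
    have hineq' : X - (lm + lp) * Y + lm * lp ≤ 0 := by
      rw [hZ] at hineq; linarith [hineq]
    rw [hA2, hB]
    constructor
    · nlinarith [hineq', sq_nonneg (Y - (lm + lp))]
    · intro heq
      have hY : Y = lm + lp := by
        have h1 : (Y - (lm + lp)) ^ 2 ≤ 0 := by nlinarith [hineq', heq]
        have h2 : (Y - (lm + lp)) ^ 2 = 0 := le_antisymm h1 (sq_nonneg _)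
        have h3 := sq_eq_zero_iff.mp h2
        linarith [sub_eq_zero.mp h3]
      rw [hY] at heq
      have hX : X = lm ^ 2 + lp ^ 2 + lm * lp := by linear_combination heq / 2
      have hsum0 : ∑ i, (μ i - lm) * (μ i - lp) * (c i * c i) = 0 := by
        rw [hexpand, hX, hY, hZ]; ring
      have hterm : ∀ i, (μ i - lm) * (μ i - lp) * (c i * c i) = 0 := by
        have h := (Finset.sum_eq_zero_iff_of_nonpos fun i _ => by
          nlinarith [(hbd i).1, (hbd i).2, mul_self_nonneg (c i),
            mul_nonneg (mul_nonneg (sub_nonneg.2 (hbd i).1) (sub_nonneg.2 (hbd i).2))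
              (mul_self_nonneg (c i))]).mp hsum0
        exact fun i => h i (Finset.mem_univ i)
      have hczero : ∀ i, μ i ≠ lm → μ i ≠ lp → c i = 0 := by
        intro i h1 h2
        have h3 := hterm i
        have h4 : μ i - lm ≠ 0 := sub_ne_zero.mpr h1
        have h5 : μ i - lp ≠ 0 := sub_ne_zero.mpr h2
        rcases mul_eq_zero.mp h3 with h6 | h6
        · rcases mul_eq_zero.mp h6 with h7 | h7
          · exact absurd h7 h4
          · exact absurd h7 h5
        · exact mul_self_eq_zero.mp h6
      set cm : Fin d → ℝ := fun i => if μ i = lm then c i else 0 with hcm_def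
      set cp : Fin d → ℝ := fun i => if μ i = lp then c i else 0 with hcp_def
      have hcc : ∀ i, cm i + cp i = c i := by
        intro i
        by_cases h1 : μ i = lm
        · have h2 : ¬ μ i = lp := by rw [h1]; exact hne
          simp [hcm_def, hcp_def, h1, h2, hne, hne.symm]
        · by_cases h2 : μ i = lp
          · simp [hcm_def, hcp_def, h1, h2, hne, hne.symm]
          · simp [hcm_def, hcp_def, h1, h2, hczero i h1 h2]
      have hprod : ∀ i, cm i * cp i = 0 := by
        intro i
        by_cases h1 : μ i = lm
        · have h2 : ¬ μ i = lp := by rw [h1]; exact hne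
          simp [hcp_def, h2]
        · simp [hcm_def, h1]
      have hmcm : ∀ i, μ i * cm i = lm * cm i := by
        intro i
        by_cases h1 : μ i = lm
        · rw [h1]
        · simp [hcm_def, h1]
      have hmcp : ∀ i, μ i * cp i = lp * cp i := by
        intro i
        by_cases h1 : μ i = lp
        · rw [h1]
        · simp [hcp_def, h1]
      set u : Fin d → ℝ := ∑ i, cm i • e i with hu_def
      set v : Fin d → ℝ := ∑ i, cp i • e i with hv_def
      have hau : a.mulVec u = lm • u := by
        calc a.mulVec u = ∑ i, (μ i * cm i) • e i := by rw [hu_def]; exact hmul cm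
          _ = ∑ i, lm • (cm i • e i) :=
            Finset.sum_congr rfl fun i _ => by rw [hmcm i, mul_smul]
          _ = lm • u := by rw [← Finset.smul_sum, hu_def]
      have hav : a.mulVec v = lp • v := by
        calc a.mulVec v = ∑ i, (μ i * cp i) • e i := by rw [hv_def]; exact hmul cp
          _ = ∑ i, lp • (cp i • e i) :=
            Finset.sum_congr rfl fun i _ => by rw [hmcp i, mul_smul]
          _ = lp • v := by rw [← Finset.smul_sum, hv_def]
      have hξuv : ξ = u + v := by
        rw [hx, hu_def, hv_def, ← Finset.sum_add_distrib]
        exact Finset.sum_congr rfl fun i _ => by rw [← add_smul, hcc i]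
      set α := ∑ i, cm i * cm i with hα_def
      set β := ∑ i, cp i * cp i with hβ_def
      have hun : ∑ k, u k ^ 2 = α := by
        have h0a : ∑ k, u k ^ 2 = ∑ k, u k * u k := Finset.sum_congr rfl fun k _ => sq _
        rw [h0a]
        conv_lhs => rw [hu_def]
        exact hdot cm cm
      have hvn : ∑ k, v k ^ 2 = β := by
        have h0a : ∑ k, v k ^ 2 = ∑ k, v k * v k := Finset.sum_congr rfl fun k _ => sq _
        rw [h0a]
        conv_lhs => rw [hv_def]
        exact hdot cp cp
      have hαβ1 : α + β = 1 := by
        have h1 : α + β = Z := by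
          rw [hα_def, hβ_def, hZ_def, ← Finset.sum_add_distrib]
          refine Finset.sum_congr rfl fun i _ => ?_
          linear_combination (c i + cm i + cp i) * hcc i - 2 * hprod i
        rw [h1, hZ]
      have hlin : lm * α + lp * β = lm + lp := by
        have h1 : lm * α + lp * β = Y := by
          rw [hα_def, hβ_def, hY_def, Finset.mul_sum, Finset.mul_sum,
            ← Finset.sum_add_distrib]
          refine Finset.sum_congr rfl fun i _ => ?_
          by_cases h1 : μ i = lm
          · have h2 : ¬ μ i = lp := by rw [h1]; exact hne
            simp [hcm_def, hcp_def, h1, h2, hne, hne.symm]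
            ring
          · by_cases h2 : μ i = lp
            · simp [hcm_def, hcp_def, h1, h2, hne, hne.symm]
              ring
            · simp [hcm_def, hcp_def, h1, h2, hczero i h1 h2]
        rw [h1, hY]
      have hα : α = -lm / (lp - lm) := by
        rw [eq_div_iff hD]
        linear_combination (-1 : ℝ) * hlin + lp * hαβ1
      have hβ : β = lp / (lp - lm) := by
        rw [eq_div_iff hD]
        linear_combination hlin - lm * hαβ1
      have hαpos : 0 < α := by
        rw [hα]; apply div_pos <;> linarith
      have hβpos : 0 < β := by
        rw [hβ]; apply div_pos <;> linarith
      refine ⟨(Real.sqrt α)⁻¹ • u, (Real.sqrt β)⁻¹ • v, ?_, ?_, ?_, ?_, ?_⟩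
      · simp only [Pi.smul_apply, smul_eq_mul, mul_pow, ← Finset.mul_sum]
        rw [hun, inv_pow, Real.sq_sqrt hαpos.le]
        exact inv_mul_cancel₀ hαpos.ne'
      · simp only [Pi.smul_apply, smul_eq_mul, mul_pow, ← Finset.mul_sum]
        rw [hvn, inv_pow, Real.sq_sqrt hβpos.le]
        exact inv_mul_cancel₀ hβpos.ne'
      · rw [Matrix.mulVec_smul, hau, smul_comm]
      · rw [Matrix.mulVec_smul, hav, smul_comm]
      · rw [← hα, ← hβ, smul_smul, smul_smul,
          mul_inv_cancel₀ (Real.sqrt_ne_zero'.mpr hαpos),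
          mul_inv_cancel₀ (Real.sqrt_ne_zero'.mpr hβpos), one_smul, one_smul]
        exact hξuv
  constructor
  · constructor
    · obtain ⟨vm, hvm0, hvma⟩ := hlm.1
      obtain ⟨vp, hvp0, hvpa⟩ := hlp.1
      obtain ⟨x, hx1, hax⟩ := hnorm vm lm hvm0 hvma
      obtain ⟨y, hy1, hay⟩ := hnorm vp lp hvp0 hvpa
      obtain ⟨hunit, hval⟩ := hback x y hx1 hy1 hax hay
      exact ⟨_, hunit, hval.symm⟩
    · rintro g ⟨ξ, hξ1, rfl⟩
      exact (upper ξ hξ1).1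
  · intro ξ hξ1
    constructor
    · exact (upper ξ hξ1).2
    · rintro ⟨x, y, hx1, hy1, hax, hay, rfl⟩
      exact (hback x y hx1 hy1 hax hay).2
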